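/- Let n ≥ 4, let w = (a_1,...,a_m) be a reduced word for the long word w0 in S_n (so m = C(n,2)), and let A be a 4-element subset of {1,...,n}. Then the induced word of w on A is a reduced word for the long word in S_4; in particular, it has length exactly 6 = C(4,2), and the product of the corresponding adjacent transpositions in S_4 is the permutation [4,3,2,1]. -/

import Mathlib

/-- The adjacent transposition `s_a`, swapping `a` and `a+1`, as a permutation of `ℕ`. -/
def adjTransposition (a : ℕ) : Equiv.Perm ℕ := Equiv.swap a (a + 1)

/-- The long word `w₀ = [n, n-1, …, 2, 1]` in `S_n`: the permutation of `ℕ` sending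
`i` to `n + 1 - i` for `i ∈ {1, …, n}` and fixing all other natural numbers. -/
def longWord (n : ℕ) : Equiv.Perm ℕ :=
  Function.Involutive.toPerm (fun i => if 1 ≤ i ∧ i ≤ n then n + 1 - i else i)
    (by intro i; dsimp only; split_ifs <;> omega)

/-- `w` is a reduced word for the long word in `S_n`: a sequence of letters in
`{1, …, n-1}` of length `C(n,2)` whose associated product of adjacent
transpositions `s_{a_1} s_{a_2} ⋯ s_{a_m}` equals `w₀`. -/
def IsReducedWord (n : ℕ) (w : List ℕ) : Prop :=
  w.length = n.choose 2 ∧ (∀ a ∈ w, 1 ≤ a ∧ a ≤ n - 1) ∧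
    (w.map adjTransposition).prod = longWord n

/-- Auxiliary recursion computing the induced word on a subset `A` of wires:
`π` is the current permutation `π_{k-1}` (with `π j` the wire in position `j`);
at a step with letter `a`, the wires `π a` and `π (a+1)` cross, and if both lie
in `A` we record the position of `a` among the positions currently occupied by
the wires of `A`. -/
def inducedAux (A : Finset ℕ) : List ℕ → Equiv.Perm ℕ → List ℕ
  | [], _ => []
  | a :: rest, π =>
      (if π a ∈ A ∧ π (a + 1) ∈ A
        then [((Finset.Icc 1 a).filter (fun p => π p ∈ A)).card]
        else []) ++ inducedAux A rest (π * adjTransposition a)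

/-- The induced word of the word `w` on the subset `A` of wires. -/
def inducedWord (w : List ℕ) (A : Finset ℕ) : List ℕ := inducedAux A w 1

/-- The reentrant set `X` of four reduced words for the long word in `S_4`. -/
def reentrantSet : Finset (List ℕ) :=
  {[1,2,3,2,1,2], [3,2,1,2,3,2], [2,1,2,3,2,1], [2,3,2,1,2,3]}

lemma adjT_apply (a x : ℕ) : adjTransposition a x = if x = a then a + 1 else if x = a + 1 then a else x := by
  simp [adjTransposition, Equiv.swap_apply_def]

lemma adjT_apply_of_ne (a x : ℕ) (h1 : x ≠ a) (h2 : x ≠ a + 1) : adjTransposition a x = x := by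
  rw [adjT_apply]; simp [h1, h2]

lemma longWord_apply (n i : ℕ) : longWord n i = if 1 ≤ i ∧ i ≤ n then n + 1 - i else i := rfl

lemma longWord_symm (n : ℕ) : (longWord n).symm = longWord n := rfl

/-- permutations fixing everything outside `[1,n]` -/
def FixOut (n : ℕ) (π : Equiv.Perm ℕ) : Prop := ∀ x, x ∉ Finset.Icc 1 n → π x = x

lemma fixOut_one (n : ℕ) : FixOut n 1 := fun _ _ => rfl

lemma fixOut_mul (n : ℕ) {π : Equiv.Perm ℕ} (h : FixOut n π) {a : ℕ} (h1 : 1 ≤ a) (h2 : a + 1 ≤ n) :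
    FixOut n (π * adjTransposition a) := by
  intro x hx
  have hx' : ¬ (1 ≤ x ∧ x ≤ n) := by simpa [Finset.mem_Icc] using hx
  rw [Equiv.Perm.mul_apply, adjT_apply_of_ne a x (by omega) (by omega)]
  exact h x hx

lemma fixOut_mem (n : ℕ) {π : Equiv.Perm ℕ} (h : FixOut n π) {a : ℕ} (ha : a ∈ Finset.Icc 1 n) :
    π a ∈ Finset.Icc 1 n := by
  by_contra hc
  have := h _ hc
  have := π.injective (a₁ := π a) (a₂ := a) this
  rw [this] at hc; exact hc ha

lemma fixOut_prod (n : ℕ) (l : List ℕ) (hl : ∀ a ∈ l, 1 ≤ a ∧ a ≤ n - 1) (hn : 1 ≤ n) :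
    FixOut n (l.map adjTransposition).prod := by
  induction l with
  | nil => exact fixOut_one n
  | cons a rest ih =>
    intro x hx
    have ha := hl a (by simp)
    have hrest := ih (fun b hb => hl b (by simp [hb]))
    have hx' : ¬ (1 ≤ x ∧ x ≤ n) := by simpa [Finset.mem_Icc] using hx
    simp only [List.map_cons, List.prod_cons, Equiv.Perm.mul_apply]
    rw [hrest x hx, adjT_apply_of_ne a x (by omega) (by omega)]

/-- number of wires of `A` at positions `≤ p` in state `π` -/
def rkP (A : Finset ℕ) (π : Equiv.Perm ℕ) (p : ℕ) : ℕ :=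
  ((Finset.Icc 1 p).filter (fun q => π q ∈ A)).card

/-- rank of `x` in `A` -/
def rkA (A : Finset ℕ) (x : ℕ) : ℕ := (A.filter (fun y => y ≤ x)).card

lemma rkP_pred (A : Finset ℕ) (π : Equiv.Perm ℕ) {p : ℕ} (hp : 1 ≤ p) :
    rkP A π p = rkP A π (p - 1) + (if π p ∈ A then 1 else 0) := by
  have h : Finset.Icc 1 p = insert p (Finset.Icc 1 (p - 1)) := by
    ext q; simp only [Finset.mem_Icc, Finset.mem_insert]; omega
  have hp' : p ∉ Finset.Icc 1 (p - 1) := by simp [Finset.mem_Icc]; omega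
  unfold rkP
  rw [h, Finset.filter_insert]
  split_ifs with hmem
  · rw [Finset.card_insert_of_notMem (by simp [Finset.mem_filter]; intro h'; omega)]
  · rfl

lemma rkP_mono (A : Finset ℕ) (π : Equiv.Perm ℕ) {p q : ℕ} (h : p ≤ q) :
    rkP A π p ≤ rkP A π q :=
  Finset.card_le_card (Finset.filter_subset_filter _ (Finset.Icc_subset_Icc_right h))

lemma rkP_strict (A : Finset ℕ) (π : Equiv.Perm ℕ) {p q : ℕ} (h : p < q) (h1 : 1 ≤ q)
    (h2 : π q ∈ A) : rkP A π p < rkP A π q := by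
  have := rkP_pred A π h1 (p := q)
  have h3 : rkP A π p ≤ rkP A π (q - 1) := rkP_mono A π (by omega)
  rw [if_pos h2] at this; omega

lemma rkP_pos (A : Finset ℕ) (π : Equiv.Perm ℕ) {p : ℕ} (h1 : 1 ≤ p) (h2 : π p ∈ A) :
    1 ≤ rkP A π p := by
  have : p ∈ (Finset.Icc 1 p).filter (fun q => π q ∈ A) := by
    simp [Finset.mem_Icc, h1, h2]
  exact Finset.card_pos.mpr ⟨p, this⟩

/-- the set of positions of the wires of `A` has exactly `A.card` elements -/
lemma posCard (n : ℕ) (A : Finset ℕ) (hA : A ⊆ Finset.Icc 1 n) {π : Equiv.Perm ℕ}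
    (hπ : FixOut n π) :
    ((Finset.Icc 1 n).filter (fun q => π q ∈ A)).card = A.card := by
  have : (Finset.Icc 1 n).filter (fun q => π q ∈ A) = A.image π.symm := by
    ext q
    simp only [Finset.mem_filter, Finset.mem_image]
    constructor
    · rintro ⟨hq, hmem⟩; exact ⟨π q, hmem, π.symm_apply_apply q⟩
    · rintro ⟨x, hx, rfl⟩
      have hx' : x ∈ Finset.Icc 1 n := hA hx
      have h1 : π (π.symm x) = x := π.apply_symm_apply x
      constructor
      · by_contra hc
        rw [hπ _ hc] at h1; rw [h1] at hc; exact hc hx'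
      · rw [h1]; exact hx
  rw [this, Finset.card_image_of_injective _ π.symm.injective]

lemma rkP_le (n : ℕ) (A : Finset ℕ) (hA : A ⊆ Finset.Icc 1 n) {π : Equiv.Perm ℕ}
    (hπ : FixOut n π) {p : ℕ} (hp : p ≤ n) : rkP A π p ≤ A.card := by
  rw [← posCard n A hA hπ]
  exact Finset.card_le_card (Finset.filter_subset_filter _ (Finset.Icc_subset_Icc_right hp))

/-- if `a+1` is also an `A`-position beyond `p`, the count up to `p` is at most `card - 1` -/
lemma rkP_le_of_extra (n : ℕ) (A : Finset ℕ) (hA : A ⊆ Finset.Icc 1 n) {π : Equiv.Perm ℕ}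
    (hπ : FixOut n π) {p e : ℕ} (hpe : p < e) (he1 : 1 ≤ e) (hen : e ≤ n) (hev : π e ∈ A) :
    rkP A π p + 1 ≤ A.card := by
  have h1 : rkP A π p < rkP A π e := rkP_strict A π hpe he1 hev
  have h2 : rkP A π e ≤ A.card := rkP_le n A hA hπ hen
  omega

lemma rkP_mul_of_lt (A : Finset ℕ) (π : Equiv.Perm ℕ) {a p : ℕ} (h : p < a) :
    rkP A (π * adjTransposition a) p = rkP A π p := by
  unfold rkP
  congr 1
  apply Finset.filter_congr
  intro q hq
  simp only [Finset.mem_Icc] at hq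
  rw [Equiv.Perm.mul_apply, adjT_apply_of_ne a q (by omega) (by omega)]

lemma rkP_mul_of_ge (A : Finset ℕ) (π : Equiv.Perm ℕ) {a p : ℕ} (ha : 1 ≤ a) (h : a + 1 ≤ p) :
    rkP A (π * adjTransposition a) p = rkP A π p := by
  unfold rkP
  have : (Finset.Icc 1 p).filter (fun q => (π * adjTransposition a) q ∈ A)
      = ((Finset.Icc 1 p).filter (fun q => π q ∈ A)).image (adjTransposition a) := by
    ext q
    simp only [Finset.mem_filter, Finset.mem_image, Finset.mem_Icc]
    constructor
    · rintro ⟨hq, hmem⟩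
      refine ⟨adjTransposition a q, ⟨?_, ?_⟩, ?_⟩
      · rw [adjT_apply]; split_ifs <;> omega
      · rwa [Equiv.Perm.mul_apply] at hmem
      · rw [adjT_apply, adjT_apply]; split_ifs <;> omega
    · rintro ⟨r, ⟨hr, hmem⟩, rfl⟩
      constructor
      · rw [adjT_apply]; split_ifs <;> omega
      · rw [Equiv.Perm.mul_apply]
        have : adjTransposition a (adjTransposition a r) = r := by
          rw [adjT_apply, adjT_apply]; split_ifs <;> omega
        rwa [this]
  rw [this, Finset.card_image_of_injective _ (adjTransposition a).injective]

lemma main_inv (n : ℕ) (hn : 1 ≤ n) (A : Finset ℕ) (hA : A ⊆ Finset.Icc 1 n)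
    (hA4 : A.card = 4) :
    ∀ (l : List ℕ) (π τ : Equiv.Perm ℕ),
    (∀ a ∈ l, 1 ≤ a ∧ a ≤ n - 1) →
    FixOut n π →
    (∀ p ∈ Finset.Icc 1 n, π p ∈ A → τ (rkP A π p) = rkA A (π p)) →
    (∀ j ∈ inducedAux A l π, 1 ≤ j ∧ j ≤ 3) ∧
    (∀ p ∈ Finset.Icc 1 n, (π * (l.map adjTransposition).prod) p ∈ A →
      (τ * ((inducedAux A l π).map adjTransposition).prod)
          (rkP A (π * (l.map adjTransposition).prod) p)
        = rkA A ((π * (l.map adjTransposition).prod) p)) := by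
  intro l
  induction l with
  | nil =>
    intro π τ _ _ hInv
    refine ⟨by simp [inducedAux], ?_⟩
    intro p hp hmem
    simpa [inducedAux] using hInv p hp (by simpa using hmem)
  | cons a rest ih =>
    intro π τ hlet hπ hInv
    have ha : 1 ≤ a ∧ a ≤ n - 1 := hlet a (by simp)
    have ha1 : 1 ≤ a := ha.1
    have han : a + 1 ≤ n := by omega
    set π' := π * adjTransposition a with hπ'def
    have hπ'fix : FixOut n π' := fixOut_mul n hπ ha1 han
    have hπ'a : π' a = π (a + 1) := by
      rw [hπ'def, Equiv.Perm.mul_apply, adjT_apply]; simp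
    have hπ'a1 : π' (a + 1) = π a := by
      rw [hπ'def, Equiv.Perm.mul_apply, adjT_apply]; simp
    have hπ'p : ∀ p, p ≠ a → p ≠ a + 1 → π' p = π p := by
      intro p h1 h2
      rw [hπ'def, Equiv.Perm.mul_apply, adjT_apply_of_ne a p h1 h2]
    have hrest : ∀ b ∈ rest, 1 ≤ b ∧ b ≤ n - 1 := fun b hb => hlet b (by simp [hb])
    by_cases hb : π a ∈ A ∧ π (a + 1) ∈ A
    · -- both wires belong to A
      set j := rkP A π a with hjdef
      have hj1 : 1 ≤ j := rkP_pos A π ha1 hb.1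
      have hj3 : j ≤ 3 := by
        have := rkP_le_of_extra n A hA hπ (p := a) (e := a + 1) (by omega) (by omega) han hb.2
        omega
      have hsucc : rkP A π (a + 1) = j + 1 := by
        have := rkP_pred A π (p := a + 1) (by omega)
        rw [if_pos hb.2] at this
        simpa using this
      -- the new invariant
      have hInv' : ∀ p ∈ Finset.Icc 1 n, π' p ∈ A →
          (τ * adjTransposition j) (rkP A π' p) = rkA A (π' p) := by
        intro p hp hmem
        have hpIcc : 1 ≤ p ∧ p ≤ n := Finset.mem_Icc.mp hp
        rcases eq_or_ne p a with rfl | hpa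
        · -- p = a
          have h1 : rkP A π' p = j := by
            have e1 := rkP_pred A π' (p := p) ha1
            rw [if_pos (hπ'a ▸ hb.2)] at e1
            have e2 := rkP_pred A π (p := p) ha1
            rw [if_pos hb.1] at e2
            rw [e1, rkP_mul_of_lt A π (a := p) (by omega), hjdef, e2]
          rw [h1, hπ'a, Equiv.Perm.mul_apply]
          have : adjTransposition j j = j + 1 := by rw [adjT_apply]; simp
          rw [this, ← hsucc]
          exact hInv (p + 1) (Finset.mem_Icc.mpr ⟨by omega, han⟩) hb.2
        · rcases eq_or_ne p (a + 1) with rfl | hpa1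
          · -- p = a + 1
            have h1 : rkP A π' (a + 1) = j + 1 := by
              rw [hπ'def, rkP_mul_of_ge A π ha1 (le_refl _), hsucc]
            rw [h1, hπ'a1, Equiv.Perm.mul_apply]
            have : adjTransposition j (j + 1) = j := by rw [adjT_apply]; simp
            rw [this, hjdef]
            exact hInv a (Finset.mem_Icc.mpr ⟨ha1, by omega⟩) hb.1
          · -- p distinct from a, a+1
            have hval : π' p = π p := hπ'p p hpa hpa1
            have h1 : rkP A π' p = rkP A π p := by
              rcases lt_or_ge p a with h | h
              · exact rkP_mul_of_lt A π h
              · exact rkP_mul_of_ge A π ha1 (by omega)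
            have hmem' : π p ∈ A := hval ▸ hmem
            have hne : rkP A π p ≠ j ∧ rkP A π p ≠ j + 1 := by
              rcases lt_or_ge p a with h | h
              · have := rkP_strict A π (p := p) (q := a) h ha1 hb.1
                omega
              · have hlt : a + 1 < p := by omega
                have := rkP_strict A π (p := a + 1) (q := p) hlt hpIcc.1 hmem'
                omega
            rw [h1, hval, Equiv.Perm.mul_apply, adjT_apply_of_ne j _ hne.1 hne.2]
            exact hInv p hp hmem'
      obtain ⟨ihlet, ihprod⟩ := ih π' (τ * adjTransposition j) hrest hπ'fix hInv'
      have hunf : inducedAux A (a :: rest) π = j :: inducedAux A rest π' := by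
        simp [inducedAux, if_pos hb, hjdef, rkP, hπ'def]
      constructor
      · intro k hk
        rw [hunf] at hk
        rcases List.mem_cons.mp hk with rfl | hk
        · exact ⟨hj1, hj3⟩
        · exact ihlet k hk
      · intro p hp hmem
        rw [hunf]
        simp only [List.map_cons, List.prod_cons, ← mul_assoc] at *
        exact ihprod p hp hmem
    · -- not both wires in A
      have hInv' : ∀ p ∈ Finset.Icc 1 n, π' p ∈ A → τ (rkP A π' p) = rkA A (π' p) := by
        intro p hp hmem
        have hpIcc : 1 ≤ p ∧ p ≤ n := Finset.mem_Icc.mp hp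
        rcases eq_or_ne p a with rfl | hpa
        · -- p = a : wire π (a+1) ∈ A, π a ∉ A
          have hmem1 : π (p + 1) ∈ A := hπ'a ▸ hmem
          have hmem0 : π p ∉ A := fun hc => hb ⟨hc, hmem1⟩
          have h1 : rkP A π' p = rkP A π (p + 1) := by
            have e1 := rkP_pred A π' (p := p) ha1
            rw [if_pos (hπ'a ▸ hmem1)] at e1
            have e2 := rkP_pred A π (p := p + 1) (by omega)
            rw [if_pos hmem1] at e2
            have e3 := rkP_pred A π (p := p) ha1
            rw [if_neg hmem0] at e3
            have e4 : rkP A π' (p - 1) = rkP A π (p - 1) :=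
              rkP_mul_of_lt A π (by omega)
            simp only [Nat.add_sub_cancel] at e2
            omega
          rw [h1, hπ'a]
          exact hInv (p + 1) (Finset.mem_Icc.mpr ⟨by omega, han⟩) hmem1
        · rcases eq_or_ne p (a + 1) with rfl | hpa1
          · -- p = a+1 : wire π a ∈ A, π (a+1) ∉ A
            have hmem0 : π a ∈ A := hπ'a1 ▸ hmem
            have hmem1 : π (a + 1) ∉ A := fun hc => hb ⟨hmem0, hc⟩
            have h1 : rkP A π' (a + 1) = rkP A π a := by
              have e1 : rkP A π' (a + 1) = rkP A π (a + 1) :=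
                rkP_mul_of_ge A π ha1 (le_refl _)
              have e2 := rkP_pred A π (p := a + 1) (by omega)
              rw [if_neg hmem1] at e2
              simp only [Nat.add_sub_cancel] at e2
              omega
            rw [h1, hπ'a1]
            exact hInv a (Finset.mem_Icc.mpr ⟨ha1, by omega⟩) hmem0
          · have hval : π' p = π p := hπ'p p hpa hpa1
            have h1 : rkP A π' p = rkP A π p := by
              rcases lt_or_ge p a with h | h
              · exact rkP_mul_of_lt A π h
              · exact rkP_mul_of_ge A π ha1 (by omega)
            rw [h1, hval]
            exact hInv p hp (hval ▸ hmem)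
      obtain ⟨ihlet, ihprod⟩ := ih π' τ hrest hπ'fix hInv'
      have hunf : inducedAux A (a :: rest) π = inducedAux A rest π' := by
        simp [inducedAux, if_neg hb, hπ'def]
      constructor
      · intro k hk; exact ihlet k (hunf ▸ hk)
      · intro p hp hmem
        rw [hunf]
        simp only [List.map_cons, List.prod_cons, ← mul_assoc] at *
        exact ihprod p hp hmem

/-- the list of pairs of wires crossing at each step -/
def crossings : List ℕ → Equiv.Perm ℕ → List (ℕ × ℕ)
  | [], _ => []
  | a :: rest, π => (π a, π (a + 1)) :: crossings rest (π * adjTransposition a)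

lemma crossings_length (l : List ℕ) (π : Equiv.Perm ℕ) :
    (crossings l π).length = l.length := by
  induction l generalizing π with
  | nil => rfl
  | cons a rest ih => simp [crossings, ih]

lemma inducedAux_length (A : Finset ℕ) (l : List ℕ) (π : Equiv.Perm ℕ) :
    (inducedAux A l π).length
      = (crossings l π).countP (fun e => decide (e.1 ∈ A ∧ e.2 ∈ A)) := by
  induction l generalizing π with
  | nil => rfl
  | cons a rest ih =>
    simp only [inducedAux, crossings, List.countP_cons, List.length_append, ih]
    by_cases hb : π a ∈ A ∧ π (a + 1) ∈ A <;> simp [hb] <;> omega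

lemma crossings_mem (n : ℕ) (l : List ℕ) (π : Equiv.Perm ℕ)
    (hlet : ∀ a ∈ l, 1 ≤ a ∧ a ≤ n - 1) (hn : 1 ≤ n) (hπ : FixOut n π) :
    ∀ e ∈ crossings l π, e.1 ∈ Finset.Icc 1 n ∧ e.2 ∈ Finset.Icc 1 n ∧ e.1 ≠ e.2 := by
  induction l generalizing π with
  | nil => simp [crossings]
  | cons a rest ih =>
    intro e he
    have ha := hlet a (by simp)
    rw [crossings, List.mem_cons] at he
    rcases he with rfl | he
    · refine ⟨fixOut_mem n hπ (Finset.mem_Icc.mpr (by omega)),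
        fixOut_mem n hπ (Finset.mem_Icc.mpr (by omega)), ?_⟩
      simp only [ne_eq]
      intro hc
      have := π.injective hc
      omega
    · exact ih (π * adjTransposition a) (fun b hb => hlet b (by simp [hb]))
        (fixOut_mul n hπ ha.1 (by omega)) e he

/-- one step of the inversion-parity bookkeeping -/
lemma inv_step (π : Equiv.Perm ℕ) (a x y : ℕ) (hxy : x ≠ y) :
    ((π * adjTransposition a).symm y < (π * adjTransposition a).symm x ↔
      Xor' (π.symm y < π.symm x)
        ((π a = x ∧ π (a + 1) = y) ∨ (π a = y ∧ π (a + 1) = x))) := by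
  have hs : ∀ z, (π * adjTransposition a).symm z = adjTransposition a (π.symm z) := by
    intro z
    simp [adjTransposition, Equiv.Perm.mul_apply, Equiv.symm_apply_eq, Equiv.swap_apply_self]
  have hvx : ∀ z w, (π z = w) ↔ (z = π.symm w) := by
    intro z w; rw [Equiv.eq_symm_apply]
  set p := π.symm x with hp
  set q := π.symm y with hq
  have hpq : p ≠ q := fun h => hxy (by
    have := congrArg π h; simpa [hp, hq] using this)
  rw [hs, hs, hvx, hvx, hvx, hvx]
  rw [adjT_apply, adjT_apply]
  unfold Xor' Xor
  split_ifs <;> constructor <;> intro h' <;> omega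

lemma pair_eq_pair (a b c d : ℕ) :
    ({a, b} : Finset ℕ) = {c, d} ↔ (a = c ∧ b = d) ∨ (a = d ∧ b = c) := by
  constructor
  · intro he
    have h1 : a ∈ ({c, d} : Finset ℕ) := he ▸ (by simp)
    have h2 : b ∈ ({c, d} : Finset ℕ) := he ▸ (by simp)
    have h3 : c ∈ ({a, b} : Finset ℕ) := he ▸ (by simp)
    have h4 : d ∈ ({a, b} : Finset ℕ) := he ▸ (by simp)
    simp only [Finset.mem_insert, Finset.mem_singleton] at h1 h2 h3 h4
    tauto
  · rintro (⟨rfl, rfl⟩ | ⟨rfl, rfl⟩)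
    · rfl
    · exact Finset.pair_comm a b

lemma xor_aux1 (P Q R : Prop) (hQ : ¬Q) : Xor' (Xor' P Q) R ↔ Xor' P R := by
  unfold Xor' Xor; tauto

lemma xor_aux2 (P Q R : Prop) (hQ : Q) : Xor' (Xor' P Q) R ↔ Xor' P (¬R) := by
  unfold Xor' Xor; tauto

lemma inv_parity (l : List ℕ) : ∀ (π : Equiv.Perm ℕ) (x y : ℕ), x ≠ y →
    ((π * (l.map adjTransposition).prod).symm y < (π * (l.map adjTransposition).prod).symm x ↔
      Xor' (π.symm y < π.symm x)
        (Odd ((crossings l π).countP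
          (fun e => decide ((e.1 = x ∧ e.2 = y) ∨ (e.1 = y ∧ e.2 = x)))))) := by
  induction l with
  | nil =>
    intro π x y hxy
    simp [crossings, Xor', Xor]
  | cons a rest ih =>
    intro π x y hxy
    have step := inv_step π a x y hxy
    have IH := ih (π * adjTransposition a) x y hxy
    simp only [crossings, List.countP_cons, List.map_cons, List.prod_cons, ← mul_assoc] at *
    rw [IH, step]
    by_cases hQ : (π a = x ∧ π (a + 1) = y) ∨ (π a = y ∧ π (a + 1) = x)
    · simp only [decide_eq_true_eq]
      rw [if_pos hQ, Nat.odd_add_one]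
      exact xor_aux2 _ _ _ hQ
    · simp only [decide_eq_true_eq]
      rw [if_neg hQ, add_zero]
      exact xor_aux1 _ _ _ hQ

lemma countP_key_sum {α β : Type*} [DecidableEq β] (l : List α) (key : α → β) (S : Finset β) :
    l.countP (fun e => decide (key e ∈ S))
      = ∑ q ∈ S, l.countP (fun e => decide (key e = q)) := by
  induction l with
  | nil => simp
  | cons e l ih =>
    simp only [List.countP_cons, ih, Finset.sum_add_distrib, decide_eq_true_eq]
    congr 1
    rw [← Finset.sum_ite_eq S (key e) (fun _ => 1)]

lemma all_one {β : Type*} {s : Finset β} {f : β → ℕ} (h1 : ∀ q ∈ s, 1 ≤ f q)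
    (h2 : ∑ q ∈ s, f q = s.card) : ∀ q ∈ s, f q = 1 := by
  intro q hq
  by_contra hne
  have h3 : ∑ _q ∈ s, (1 : ℕ) < ∑ q ∈ s, f q :=
    Finset.sum_lt_sum h1 ⟨q, hq, by have := h1 q hq; omega⟩
  simp only [Finset.sum_const, smul_eq_mul, mul_one] at h3
  omega

lemma pair_cross_odd (n : ℕ) (hn : 1 ≤ n) (w : List ℕ)
    (hlet : ∀ a ∈ w, 1 ≤ a ∧ a ≤ n - 1)
    (hprod : (w.map adjTransposition).prod = longWord n)
    {x y : ℕ} (hx : 1 ≤ x) (hxy : x < y) (hyn : y ≤ n) :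
    Odd ((crossings w 1).countP
      (fun e => decide ((e.1 = x ∧ e.2 = y) ∨ (e.1 = y ∧ e.2 = x)))) := by
  have hp := inv_parity w 1 x y (by omega)
  rw [one_mul, hprod] at hp
  have hL : (longWord n).symm y < (longWord n).symm x := by
    rw [longWord_symm, longWord_apply, longWord_apply]
    rw [if_pos ⟨by omega, hyn⟩, if_pos ⟨hx, by omega⟩]
    omega
  have hp' := hp.mp hL
  have h1 : ¬ ((1 : Equiv.Perm ℕ).symm y < (1 : Equiv.Perm ℕ).symm x) := by
    simp [Equiv.Perm.one_symm]; omega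
  rcases hp' with ⟨h, _⟩ | ⟨h, _⟩
  · exact absurd h h1
  · exact h

lemma crossings_count_eq_one (n : ℕ) (hn : 1 ≤ n) (w : List ℕ)
    (hlen : w.length = n.choose 2) (hlet : ∀ a ∈ w, 1 ≤ a ∧ a ≤ n - 1)
    (hprod : (w.map adjTransposition).prod = longWord n) :
    ∀ q ∈ Finset.powersetCard 2 (Finset.Icc 1 n),
      (crossings w 1).countP (fun e => decide (({e.1, e.2} : Finset ℕ) = q)) = 1 := by
  set S := Finset.powersetCard 2 (Finset.Icc 1 n) with hS
  set f : Finset ℕ → ℕ :=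
    fun q => (crossings w 1).countP (fun e => decide (({e.1, e.2} : Finset ℕ) = q)) with hf
  have hmemS : ∀ e ∈ crossings w 1, ({e.1, e.2} : Finset ℕ) ∈ S := by
    intro e he
    obtain ⟨h1, h2, h3⟩ := crossings_mem n w 1 hlet hn (fixOut_one n) e he
    rw [hS, Finset.mem_powersetCard]
    exact ⟨by simp [Finset.insert_subset_iff, h1, h2], Finset.card_pair h3⟩
  have hsum : ∑ q ∈ S, f q = S.card := by
    rw [hf, ← countP_key_sum (crossings w 1) (fun e => ({e.1, e.2} : Finset ℕ)) S]
    have ht : (crossings w 1).countP (fun e => decide (({e.1, e.2} : Finset ℕ) ∈ S))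
        = (crossings w 1).length := by
      apply List.countP_eq_length.mpr
      intro e he; simpa using hmemS e he
    rw [ht, crossings_length, hlen, hS, Finset.card_powersetCard, Nat.card_Icc]
    simp
  have hpos : ∀ q ∈ S, 1 ≤ f q := by
    intro q hq
    rw [hS, Finset.mem_powersetCard] at hq
    obtain ⟨x, y, hne, rfl⟩ := Finset.card_eq_two.mp hq.2
    have hx : x ∈ Finset.Icc 1 n := hq.1 (by simp)
    have hy : y ∈ Finset.Icc 1 n := hq.1 (by simp)
    rw [Finset.mem_Icc] at hx hy
    have hcongr : ∀ (u v : ℕ), f {u, v} = (crossings w 1).countP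
        (fun e => decide ((e.1 = u ∧ e.2 = v) ∨ (e.1 = v ∧ e.2 = u))) := by
      intro u v
      apply List.countP_congr
      intro e _
      simp only [decide_eq_true_eq]
      exact pair_eq_pair e.1 e.2 u v
    rcases hne.lt_or_gt with hlt | hlt
    · rw [hcongr x y]
      exact (pair_cross_odd n hn w hlet hprod hx.1 hlt hy.2).pos
    · rw [hcongr x y]
      have hswap : (crossings w 1).countP
            (fun e => decide ((e.1 = x ∧ e.2 = y) ∨ (e.1 = y ∧ e.2 = x)))
          = (crossings w 1).countP
            (fun e => decide ((e.1 = y ∧ e.2 = x) ∨ (e.1 = x ∧ e.2 = y))) := by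
        apply List.countP_congr
        intro e _
        simp only [decide_eq_true_eq]
        tauto
      rw [hswap]
      exact (pair_cross_odd n hn w hlet hprod hy.1 hlt hx.2).pos
  exact all_one hpos hsum

lemma induced_length_eq (n : ℕ) (hn : 1 ≤ n) (w : List ℕ)
    (hlen : w.length = n.choose 2) (hlet : ∀ a ∈ w, 1 ≤ a ∧ a ≤ n - 1)
    (hprod : (w.map adjTransposition).prod = longWord n)
    (A : Finset ℕ) (hA : A ⊆ Finset.Icc 1 n) (hA4 : A.card = 4) :
    (inducedAux A w 1).length = 6 := by
  rw [inducedAux_length]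
  have hcongr : (crossings w 1).countP (fun e => decide (e.1 ∈ A ∧ e.2 ∈ A))
      = (crossings w 1).countP
        (fun e => decide (({e.1, e.2} : Finset ℕ) ∈ Finset.powersetCard 2 A)) := by
    apply List.countP_congr
    intro e he
    obtain ⟨_, _, h3⟩ := crossings_mem n w 1 hlet hn (fixOut_one n) e he
    simp only [decide_eq_true_eq, Finset.mem_powersetCard]
    constructor
    · rintro ⟨h1, h2⟩
      exact ⟨by simp [Finset.insert_subset_iff, h1, h2], Finset.card_pair h3⟩
    · rintro ⟨hsub, _⟩
      exact ⟨hsub (by simp), hsub (by simp)⟩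
  rw [hcongr, countP_key_sum (crossings w 1) (fun e => ({e.1, e.2} : Finset ℕ))]
  rw [Finset.sum_congr rfl (fun q hq => crossings_count_eq_one n hn w hlen hlet hprod q
    (Finset.powersetCard_mono hA hq))]
  simp [Finset.card_powersetCard, hA4]
  rfl

lemma rkP_one (A : Finset ℕ) (hA1 : ∀ x ∈ A, 1 ≤ x) (p : ℕ) : rkP A 1 p = rkA A p := by
  unfold rkP rkA
  congr 1
  ext x
  simp only [Finset.mem_filter, Finset.mem_Icc]; simp only [Equiv.Perm.one_apply]
  constructor
  · rintro ⟨⟨_, h2⟩, h3⟩; exact ⟨h3, h2⟩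
  · rintro ⟨h1, h2⟩; exact ⟨⟨hA1 x h1, h2⟩, h1⟩

lemma fixOut_longWord (n : ℕ) : FixOut n (longWord n) := by
  intro x hx
  rw [longWord_apply, if_neg (by simpa [Finset.mem_Icc] using hx)]

lemma rkA_longWord (n : ℕ) (A : Finset ℕ) (hA : A ⊆ Finset.Icc 1 n) (hA4 : A.card = 4)
    {p : ℕ} (hp1 : 1 ≤ p) (hpn : p ≤ n) (hmem : longWord n p ∈ A) :
    rkA A (longWord n p) + rkP A (longWord n) p = 5 := by
  have hAIcc : ∀ x ∈ A, 1 ≤ x ∧ x ≤ n := fun x hx => Finset.mem_Icc.mp (hA hx)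
  set c := n + 1 - p with hc
  have hwp : longWord n p = c := by rw [longWord_apply, if_pos ⟨hp1, hpn⟩]
  rw [hwp] at hmem ⊢
  have hcA := hAIcc c hmem
  -- rkP A (longWord n) p = #(A.filter (c ≤ ·))
  have hi : rkP A (longWord n) p = (A.filter (fun x => c ≤ x)).card := by
    unfold rkP
    have himg : (Finset.Icc 1 p).filter (fun q => longWord n q ∈ A)
        = (A.filter (fun x => c ≤ x)).image (fun x => n + 1 - x) := by
      ext q
      simp only [Finset.mem_filter, Finset.mem_Icc, Finset.mem_image]
      constructor
      · rintro ⟨⟨hq1, hq2⟩, hqA⟩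
        have hwq : longWord n q = n + 1 - q := by
          rw [longWord_apply, if_pos ⟨hq1, by omega⟩]
        rw [hwq] at hqA
        have := hAIcc _ hqA
        exact ⟨n + 1 - q, ⟨hqA, by omega⟩, by omega⟩
      · rintro ⟨x, ⟨hxA, hcx⟩, rfl⟩
        have hx := hAIcc x hxA
        have hq1 : 1 ≤ n + 1 - x := by omega
        have hq2 : n + 1 - x ≤ p := by omega
        have hwq : longWord n (n + 1 - x) = x := by
          rw [longWord_apply, if_pos ⟨hq1, by omega⟩]; omega
        exact ⟨⟨hq1, hq2⟩, by rw [hwq]; exact hxA⟩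
    rw [himg, Finset.card_image_of_injOn]
    intro x hx y hy hxy
    simp only [Finset.coe_filter, Set.mem_setOf_eq] at hx hy
    have hxy' : n + 1 - x = n + 1 - y := hxy
    have h1 := hAIcc x hx.1
    have h2 := hAIcc y hy.1
    omega
  -- #(A.filter (· ≤ c)) + #(A.filter (c < ·)) = 4
  have hsplit : (A.filter (fun x => x ≤ c)).card + (A.filter (fun x => ¬ x ≤ c)).card = 4 := by
    rw [Finset.card_filter_add_card_filter_not, hA4]
  -- A.filter (c ≤ ·) = insert c (A.filter (¬ · ≤ c))
  have hins : A.filter (fun x => c ≤ x) = insert c (A.filter (fun x => ¬ x ≤ c)) := by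
    ext x
    simp only [Finset.mem_filter, Finset.mem_insert, not_le]
    constructor
    · rintro ⟨hxA, hcx⟩
      rcases eq_or_lt_of_le hcx with h | h
      · exact Or.inl h.symm
      · exact Or.inr ⟨hxA, h⟩
    · rintro (rfl | ⟨hxA, h⟩)
      · exact ⟨hmem, le_refl _⟩
      · exact ⟨hxA, le_of_lt h⟩
  have hnotmem : c ∉ A.filter (fun x => ¬ x ≤ c) := by
    intro h
    exact (Finset.mem_filter.mp h).2 (le_refl c)
  rw [hi, hins, Finset.card_insert_of_notMem hnotmem]
  unfold rkA
  omega

lemma rkP_surj (n : ℕ) (A : Finset ℕ) (hA : A ⊆ Finset.Icc 1 n) (hA4 : A.card = 4) :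
    ∀ x ∈ Finset.Icc 1 4, ∃ p, (1 ≤ p ∧ p ≤ n) ∧ longWord n p ∈ A ∧
      rkP A (longWord n) p = x := by
  set Pos := (Finset.Icc 1 n).filter (fun p => longWord n p ∈ A) with hPos
  have hcard : Pos.card = 4 := by rw [hPos, posCard n A hA (fixOut_longWord n), hA4]
  set g := fun p => rkP A (longWord n) p with hg
  have hinj : Set.InjOn g Pos := by
    intro p hp q hq hpq
    replace hp : p ∈ Pos := hp
    replace hq : q ∈ Pos := hq
    rw [hPos, Finset.mem_filter, Finset.mem_Icc] at hp hq
    have hpq' : rkP A (longWord n) p = rkP A (longWord n) q := hpq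
    by_contra hne
    rcases Nat.lt_or_ge p q with h | h
    · have := rkP_strict A (longWord n) h hq.1.1 hq.2; omega
    · have h' : q < p := by omega
      have := rkP_strict A (longWord n) h' hp.1.1 hp.2
      omega
  have hsub : Pos.image g ⊆ Finset.Icc 1 4 := by
    intro x hx
    obtain ⟨p, hp, rfl⟩ := Finset.mem_image.mp hx
    rw [hPos, Finset.mem_filter, Finset.mem_Icc] at hp
    rw [Finset.mem_Icc, hg]
    constructor
    · exact rkP_pos A (longWord n) hp.1.1 hp.2
    · have h5 := rkP_le n A hA (fixOut_longWord n) hp.1.2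
      rw [hA4] at h5
      exact h5
  have himg : Pos.image g = Finset.Icc 1 4 := by
    apply Finset.eq_of_subset_of_card_le hsub
    rw [Finset.card_image_of_injOn hinj, hcard]
    simp
  intro x hx
  rw [← himg] at hx
  obtain ⟨p, hp, rfl⟩ := Finset.mem_image.mp hx
  rw [hPos, Finset.mem_filter, Finset.mem_Icc] at hp
  exact ⟨p, hp.1, hp.2, rfl⟩

/-- For `n ≥ 4`, any reduced word `w` for the long word in `S_n`, and any
4-element subset `A ⊆ {1,…,n}`, the induced word of `w` on `A` is a reduced word
for the long word in `S₄`: in particular it has length exactly `6 = C(4,2)` and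
the product of the corresponding adjacent transpositions is the permutation
`[4,3,2,1]`. -/
theorem inducedWord_isReducedWord_S4 (n : ℕ) (hn : 4 ≤ n) (w : List ℕ)
    (hw : IsReducedWord n w) (A : Finset ℕ) (hA : A ⊆ Finset.Icc 1 n)
    (hA4 : A.card = 4) :
    IsReducedWord 4 (inducedWord w A) ∧
    (inducedWord w A).length = 6 ∧
    ((inducedWord w A).map adjTransposition).prod = longWord 4 := by
  obtain ⟨hlen, hlet, hprod⟩ := hw
  have hA1 : ∀ x ∈ A, 1 ≤ x := fun x hx => (Finset.mem_Icc.mp (hA hx)).1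
  have hInv0 : ∀ p ∈ Finset.Icc 1 n, (1 : Equiv.Perm ℕ) p ∈ A →
      (1 : Equiv.Perm ℕ) (rkP A 1 p) = rkA A ((1 : Equiv.Perm ℕ) p) := by
    intro p _ _
    simp only [Equiv.Perm.one_apply]
    exact rkP_one A hA1 p
  obtain ⟨hlet3, hfin⟩ := main_inv n (by omega) A hA hA4 w 1 1 hlet (fixOut_one n) hInv0
  simp only [one_mul, hprod] at hfin
  set T := ((inducedAux A w 1).map adjTransposition).prod with hT
  have hTfix : FixOut 4 T :=
    fixOut_prod 4 _ (fun a haa => by have := hlet3 a haa; omega) (by norm_num)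
  have hTeq : T = longWord 4 := by
    apply Equiv.ext
    intro x
    by_cases hx : x ∈ Finset.Icc 1 4
    · obtain ⟨p, ⟨hp1, hpn⟩, hpm, hrk⟩ := rkP_surj n A hA hA4 x hx
      have h1 := hfin p (Finset.mem_Icc.mpr ⟨hp1, hpn⟩) hpm
      rw [hrk] at h1
      have h2 := rkA_longWord n A hA hA4 hp1 hpn hpm
      rw [Finset.mem_Icc] at hx
      rw [longWord_apply, if_pos hx]
      omega
    · rw [hTfix x hx, longWord_apply, if_neg (by simpa [Finset.mem_Icc] using hx)]
  have hlen6 : (inducedWord w A).length = 6 :=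
    induced_length_eq n (by omega) w hlen hlet hprod A hA hA4
  exact ⟨⟨hlen6.trans rfl, hlet3, hTeq⟩, hlen6, hTeq⟩
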